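/- Let f : Ω → ℝ be C³ on an open set Ω ⊆ ℝ². The Gaussian curvature of the graph surface {(x, y, f(x,y))} ⊂ ℝ³ is K = (∂ₓ²f · ∂ᵧ²f − (∂ₓ∂ᵧf)²) / (1 + (∂ₓf)² + (∂ᵧf)²)². Equivalently, setting ψ(x,y,z) = z − f(x,y), F = |∇ψ| and V = Δψ (the 3-dimensional Laplacian), one has 2K = ∇·(V ∇ψ / F²) − Δ log F at every point of the graph. -/

import Mathlib

open Real

/-- Partial derivative along the `i`-th coordinate direction in `Fin d → ℝ`. -/
noncomputable def pd {d : ℕ} (i : Fin d) (f : (Fin d → ℝ) → ℝ) (x : Fin d → ℝ) : ℝ :=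
  fderiv ℝ f x (Pi.single i 1)

/-- The flat Laplacian on `Fin d → ℝ`. -/
noncomputable def lap {d : ℕ} (f : (Fin d → ℝ) → ℝ) (x : Fin d → ℝ) : ℝ :=
  ∑ i, pd i (pd i f) x

section aux
variable {d : ℕ} {i : Fin d} {u v : (Fin d → ℝ) → ℝ} {x : Fin d → ℝ}

lemma pd_congr (h : u =ᶠ[nhds x] v) : pd i u x = pd i v x := by
  unfold pd; rw [h.fderiv_eq]

lemma pd_const (c : ℝ) : pd i (fun _ => c) x = 0 := by
  unfold pd; simp

lemma pd_add (hu : DifferentiableAt ℝ u x) (hv : DifferentiableAt ℝ v x) :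
    pd i (fun y => u y + v y) x = pd i u x + pd i v x := by
  unfold pd; rw [fderiv_fun_add hu hv]; rfl

lemma pd_sub (hu : DifferentiableAt ℝ u x) (hv : DifferentiableAt ℝ v x) :
    pd i (fun y => u y - v y) x = pd i u x - pd i v x := by
  unfold pd; rw [fderiv_fun_sub hu hv]; rfl

lemma pd_neg : pd i (fun y => -u y) x = -pd i u x := by
  unfold pd; rw [fderiv_fun_neg]; rfl

lemma pd_mul (hu : DifferentiableAt ℝ u x) (hv : DifferentiableAt ℝ v x) :
    pd i (fun y => u y * v y) x = u x * pd i v x + v x * pd i u x := by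
  unfold pd; rw [fderiv_fun_mul hu hv]; simp [smul_eq_mul]

lemma pd_comp1 {h : ℝ → ℝ} {h' : ℝ} (hh : HasDerivAt h h' (u x))
    (hu : DifferentiableAt ℝ u x) :
    pd i (fun y => h (u y)) x = h' * pd i u x := by
  have H := hh.comp_hasFDerivAt x hu.hasFDerivAt
  unfold pd
  rw [show (fun y => h (u y)) = h ∘ u from rfl, H.fderiv]
  simp [smul_eq_mul]

lemma pd_div (hu : DifferentiableAt ℝ u x) (hv : DifferentiableAt ℝ v x) (hx : v x ≠ 0) :
    pd i (fun y => u y / v y) x = (pd i u x * v x - u x * pd i v x) / v x ^ 2 := by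
  have hinv : pd i (fun y => (v y)⁻¹) x = -(v x ^ 2)⁻¹ * pd i v x :=
    pd_comp1 (hasDerivAt_inv hx) hv
  have : pd i (fun y => u y / v y) x = pd i (fun y => u y * (v y)⁻¹) x := by
    simp [div_eq_mul_inv]
  rw [this, pd_mul (v := fun y => (v y)⁻¹) hu (hv.inv hx), hinv]
  field_simp; ring

lemma pd_sq (hu : DifferentiableAt ℝ u x) :
    pd i (fun y => u y ^ 2) x = 2 * u x * pd i u x := by
  have := pd_comp1 (i := i) (hasDerivAt_pow 2 (u x)) hu
  simpa using this

lemma diffAt_div {u v : (Fin d → ℝ) → ℝ} {x : Fin d → ℝ}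
    (hu : DifferentiableAt ℝ u x) (hv : DifferentiableAt ℝ v x) (hx : v x ≠ 0) :
    DifferentiableAt ℝ (fun y => u y / v y) x := by
  simp only [div_eq_mul_inv]
  exact hu.mul (hv.inv hx)

lemma pd_coord (j : Fin d) : pd i (fun y => y j) x = (Pi.single i (1:ℝ) : Fin d → ℝ) j := by
  have : fderiv ℝ (fun y : Fin d → ℝ => y j) x
      = (ContinuousLinearMap.proj j : (Fin d → ℝ) →L[ℝ] ℝ) :=
    (ContinuousLinearMap.proj j : (Fin d → ℝ) →L[ℝ] ℝ).fderiv
  unfold pd; rw [this]; rfl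

lemma pd_contDiffAt {n m : WithTop ℕ∞} {g : (Fin d → ℝ) → ℝ}
    (h : ContDiffAt ℝ n g x) (hmn : m + 1 ≤ n) : ContDiffAt ℝ m (pd i g) x :=
  (h.fderiv_right hmn).clm_apply contDiffAt_const

lemma pd_pd_eq_snd (i j : Fin d) {g : (Fin d → ℝ) → ℝ} (hg : ContDiffAt ℝ 2 g x) :
    pd i (pd j g) x = fderiv ℝ (fderiv ℝ g) x (Pi.single i 1) (Pi.single j 1) := by
  have hdf : DifferentiableAt ℝ (fderiv ℝ g) x :=
    (hg.fderiv_right (m := 1) (by norm_num)).differentiableAt (by norm_num)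
  show fderiv ℝ (fun y => (fderiv ℝ g y) (Pi.single j 1)) x (Pi.single i 1) = _
  rw [fderiv_clm_apply hdf (differentiableAt_const _)]
  simp

lemma pd_comm (i j : Fin d) {g : (Fin d → ℝ) → ℝ} (hg : ContDiffAt ℝ 2 g x) :
    pd i (pd j g) x = pd j (pd i g) x := by
  rw [pd_pd_eq_snd i j hg, pd_pd_eq_snd j i hg]
  exact hg.isSymmSndFDerivAt (by simp) _ _

end aux

section proj

/-- Projection `ℝ³ → ℝ²` forgetting the last coordinate, as a CLM. -/
noncomputable def pr3 : (Fin 3 → ℝ) →L[ℝ] (Fin 2 → ℝ) :=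
  ContinuousLinearMap.pi fun i : Fin 2 => ContinuousLinearMap.proj i.castSucc

lemma pr3_apply (y : Fin 3 → ℝ) : pr3 y = fun i : Fin 2 => y i.castSucc := rfl

lemma pd_comp_proj (i : Fin 2) {w : (Fin 2 → ℝ) → ℝ} {y : Fin 3 → ℝ}
    (hw : DifferentiableAt ℝ w (fun j : Fin 2 => y j.castSucc)) :
    pd i.castSucc (fun z => w (fun j : Fin 2 => z j.castSucc)) y
      = pd i w (fun j : Fin 2 => y j.castSucc) := by
  have h1 : (fun z : Fin 3 → ℝ => w (fun j : Fin 2 => z j.castSucc)) = w ∘ pr3 := rfl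
  have h2 : fderiv ℝ (w ∘ pr3) y = (fderiv ℝ w (pr3 y)).comp pr3 := by
    rw [fderiv_comp (x := y) hw pr3.differentiableAt, pr3.fderiv]
  have h3 : pr3 (Pi.single i.castSucc (1:ℝ)) = Pi.single i 1 := by
    funext j
    simp [pr3, Pi.single_apply, Fin.castSucc_inj]
  unfold pd
  rw [h1, h2]
  simp only [ContinuousLinearMap.comp_apply, h3]
  rfl

lemma pd_comp_proj_last {w : (Fin 2 → ℝ) → ℝ} {y : Fin 3 → ℝ}
    (hw : DifferentiableAt ℝ w (fun j : Fin 2 => y j.castSucc)) :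
    pd 2 (fun z => w (fun j : Fin 2 => z j.castSucc)) y = 0 := by
  have h1 : (fun z : Fin 3 → ℝ => w (fun j : Fin 2 => z j.castSucc)) = w ∘ pr3 := rfl
  have h2 : fderiv ℝ (w ∘ pr3) y = (fderiv ℝ w (pr3 y)).comp pr3 := by
    rw [fderiv_comp (x := y) hw pr3.differentiableAt, pr3.fderiv]
  have h3 : pr3 (Pi.single (2 : Fin 3) (1:ℝ)) = 0 := by
    funext j
    fin_cases j <;> simp [pr3, Pi.single_apply] <;> decide
  unfold pd
  rw [h1, h2]
  simp only [ContinuousLinearMap.comp_apply, h3, map_zero]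

end proj

theorem gauss_curvature_graph
    (Ω : Set (Fin 2 → ℝ)) (hΩ : IsOpen Ω)
    (f : (Fin 2 → ℝ) → ℝ) (hf : ContDiffOn ℝ 3 f Ω)
    -- ψ(x,y,z) = z − f(x,y) on ℝ³
    (ψ : (Fin 3 → ℝ) → ℝ)
    (hψ : ∀ x : Fin 3 → ℝ, ψ x = x 2 - f (fun i : Fin 2 => x i.castSucc))
    (q : Fin 3 → ℝ) (hq : (fun i : Fin 2 => q i.castSucc) ∈ Ω)
    -- q lies on the graph of f
    (hgraph : q 2 = f (fun i : Fin 2 => q i.castSucc)) :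
    2 * ((pd 0 (pd 0 f) (fun i : Fin 2 => q i.castSucc) *
            pd 1 (pd 1 f) (fun i : Fin 2 => q i.castSucc) -
          (pd 0 (pd 1 f) (fun i : Fin 2 => q i.castSucc)) ^ 2) /
        (1 + (pd 0 f (fun i : Fin 2 => q i.castSucc)) ^ 2 +
            (pd 1 f (fun i : Fin 2 => q i.castSucc)) ^ 2) ^ 2) =
      (∑ i, pd i (fun y =>
          lap ψ y * pd i ψ y / (∑ j, (pd j ψ y) ^ 2)) q) -
      lap (fun y => Real.log (Real.sqrt (∑ j, (pd j ψ y) ^ 2))) q := by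
  classical
  set p : Fin 2 → ℝ := fun i : Fin 2 => q i.castSucc with hp
  set a : (Fin 2 → ℝ) → ℝ := pd 0 f with ha
  set b : (Fin 2 → ℝ) → ℝ := pd 1 f with hb
  set A : (Fin 2 → ℝ) → ℝ := pd 0 a with hA
  set B : (Fin 2 → ℝ) → ℝ := pd 0 b with hB
  set C : (Fin 2 → ℝ) → ℝ := pd 1 b with hC
  set W : (Fin 2 → ℝ) → ℝ := fun x => 1 + a x ^ 2 + b x ^ 2 with hW
  -- regularity
  have hfC : ∀ x ∈ Ω, ContDiffAt ℝ 3 f x := fun x hx => hf.contDiffAt (hΩ.mem_nhds hx)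
  have hfd : ∀ x ∈ Ω, DifferentiableAt ℝ f x := fun x hx =>
    (hfC x hx).differentiableAt (by norm_num)
  have haC : ∀ x ∈ Ω, ContDiffAt ℝ 2 a x := fun x hx => pd_contDiffAt (hfC x hx) (by norm_num)
  have hbC : ∀ x ∈ Ω, ContDiffAt ℝ 2 b x := fun x hx => pd_contDiffAt (hfC x hx) (by norm_num)
  have had : ∀ x ∈ Ω, DifferentiableAt ℝ a x := fun x hx =>
    (haC x hx).differentiableAt (by norm_num)
  have hbd : ∀ x ∈ Ω, DifferentiableAt ℝ b x := fun x hx =>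
    (hbC x hx).differentiableAt (by norm_num)
  have hAd : ∀ x ∈ Ω, DifferentiableAt ℝ A x := fun x hx =>
    (pd_contDiffAt (haC x hx) (by norm_num) : ContDiffAt ℝ 1 A x).differentiableAt (by norm_num)
  have hBd : ∀ x ∈ Ω, DifferentiableAt ℝ B x := fun x hx =>
    (pd_contDiffAt (hbC x hx) (by norm_num) : ContDiffAt ℝ 1 B x).differentiableAt (by norm_num)
  have hCd : ∀ x ∈ Ω, DifferentiableAt ℝ C x := fun x hx =>
    (pd_contDiffAt (hbC x hx) (by norm_num) : ContDiffAt ℝ 1 C x).differentiableAt (by norm_num)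
  have hB'd : ∀ x ∈ Ω, DifferentiableAt ℝ (pd 1 a) x := fun x hx =>
    (pd_contDiffAt (haC x hx) (by norm_num) : ContDiffAt ℝ 1 (pd 1 a) x).differentiableAt (by norm_num)
  have hWd : ∀ x ∈ Ω, DifferentiableAt ℝ W x := fun x hx =>
    ((differentiableAt_const (1:ℝ)).add ((had x hx).pow 2)).add ((hbd x hx).pow 2)
  have hWpos : ∀ x, 0 < W x := by
    intro x
    have : W x = 1 + a x ^ 2 + b x ^ 2 := rfl
    rw [this]; positivity
  have hWne : ∀ x, W x ≠ 0 := fun x => (hWpos x).ne'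
  -- Schwarz on Ω
  have hBB' : ∀ x ∈ Ω, pd 1 a x = B x := fun x hx =>
    pd_comm 1 0 ((hfC x hx).of_le (by norm_num))
  have hevB : pd 1 a =ᶠ[nhds p] B :=
    Filter.eventuallyEq_of_mem (hΩ.mem_nhds hq) (fun z hz => hBB' z hz)
  -- derivatives of W
  have hpdW0 : ∀ x ∈ Ω, pd 0 W x = 2 * (a x * A x + b x * B x) := by
    intro x hx
    have e : pd 0 W x = pd (0 : Fin 2) (fun y => 1 + a y ^ 2 + b y ^ 2) x := rfl
    rw [e, pd_add ((differentiableAt_const (1:ℝ)).fun_add ((had x hx).fun_pow 2)) ((hbd x hx).fun_pow 2),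
      pd_add (differentiableAt_const (1:ℝ)) ((had x hx).fun_pow 2),
      pd_const, pd_sq (had x hx), pd_sq (hbd x hx), ← hA, ← hB]
    ring
  have hpdW1 : ∀ x ∈ Ω, pd 1 W x = 2 * (a x * B x + b x * C x) := by
    intro x hx
    have e : pd 1 W x = pd (1 : Fin 2) (fun y => 1 + a y ^ 2 + b y ^ 2) x := rfl
    rw [e, pd_add ((differentiableAt_const (1:ℝ)).fun_add ((had x hx).fun_pow 2)) ((hbd x hx).fun_pow 2),
      pd_add (differentiableAt_const (1:ℝ)) ((had x hx).fun_pow 2),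
      pd_const, pd_sq (had x hx), pd_sq (hbd x hx), hBB' x hx, ← hC]
    ring
  -- the open set upstairs
  set U : Set (Fin 3 → ℝ) := {y | (fun i : Fin 2 => y i.castSucc) ∈ Ω} with hUdef
  have hU3 : IsOpen U := hΩ.preimage pr3.continuous
  have hqU : q ∈ U := hq
  have hψeq : ψ = fun z => z 2 - f (fun j : Fin 2 => z j.castSucc) := funext hψ
  -- first derivatives of ψ
  have hψ01 : ∀ y ∈ U, ∀ i : Fin 2,
      pd i.castSucc ψ y = -(pd i f) (fun j : Fin 2 => y j.castSucc) := by
    intro y hy i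
    have hyΩ : (fun j : Fin 2 => y j.castSucc) ∈ Ω := hy
    have hfd' : DifferentiableAt ℝ f (fun j : Fin 2 => y j.castSucc) := hfd _ hyΩ
    have hcomp : DifferentiableAt ℝ (fun z : Fin 3 → ℝ => f (fun j : Fin 2 => z j.castSucc)) y :=
      hfd'.comp y pr3.differentiableAt
    have hcoord : DifferentiableAt ℝ (fun z : Fin 3 → ℝ => z 2) y :=
      (ContinuousLinearMap.proj (2 : Fin 3) : (Fin 3 → ℝ) →L[ℝ] ℝ).differentiableAt
    rw [hψeq, pd_sub hcoord hcomp, pd_coord, pd_comp_proj i hfd']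
    have hne : (2 : Fin 3) ≠ i.castSucc := by fin_cases i <;> decide
    rw [Pi.single_apply, if_neg hne, zero_sub]
  have hψ2 : ∀ y ∈ U, pd 2 ψ y = 1 := by
    intro y hy
    have hyΩ : (fun j : Fin 2 => y j.castSucc) ∈ Ω := hy
    have hfd' : DifferentiableAt ℝ f (fun j : Fin 2 => y j.castSucc) := hfd _ hyΩ
    have hcomp : DifferentiableAt ℝ (fun z : Fin 3 → ℝ => f (fun j : Fin 2 => z j.castSucc)) y :=
      hfd'.comp y pr3.differentiableAt
    have hcoord : DifferentiableAt ℝ (fun z : Fin 3 → ℝ => z 2) y :=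
      (ContinuousLinearMap.proj (2 : Fin 3) : (Fin 3 → ℝ) →L[ℝ] ℝ).differentiableAt
    rw [hψeq, pd_sub hcoord hcomp, pd_coord, pd_comp_proj_last hfd']
    rw [Pi.single_apply, if_pos rfl, sub_zero]
  have hz0 : (0 : Fin 3) = (0 : Fin 2).castSucc := by decide
  have hz1 : (1 : Fin 3) = (1 : Fin 2).castSucc := by decide
  -- sum of squares of ∇ψ
  have hS : ∀ y ∈ U, (∑ j, (pd j ψ y) ^ 2) = W (fun j : Fin 2 => y j.castSucc) := by
    intro y hy
    rw [Fin.sum_univ_three, hz0, hz1, hψ01 y hy 0, hψ01 y hy 1, hψ2 y hy, ← ha, ← hb]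
    show (-(a _)) ^ 2 + (-(b _)) ^ 2 + 1 ^ 2 = 1 + a _ ^ 2 + b _ ^ 2
    ring
  -- Laplacian of ψ
  have hev0 : ∀ y ∈ U, pd (0 : Fin 3) ψ =ᶠ[nhds y]
      fun z => -a (fun j : Fin 2 => z j.castSucc) :=
    fun y hy => Filter.eventuallyEq_of_mem (hU3.mem_nhds hy) (fun z hz => by
      rw [hz0, hψ01 z hz 0])
  have hev1 : ∀ y ∈ U, pd (1 : Fin 3) ψ =ᶠ[nhds y]
      fun z => -b (fun j : Fin 2 => z j.castSucc) :=
    fun y hy => Filter.eventuallyEq_of_mem (hU3.mem_nhds hy) (fun z hz => by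
      rw [hz1, hψ01 z hz 1])
  have hev2 : ∀ y ∈ U, pd (2 : Fin 3) ψ =ᶠ[nhds y] fun _ => (1:ℝ) :=
    fun y hy => Filter.eventuallyEq_of_mem (hU3.mem_nhds hy) (fun z hz => hψ2 z hz)
  have hlap : ∀ y ∈ U, lap ψ y
      = -(A (fun j : Fin 2 => y j.castSucc) + C (fun j : Fin 2 => y j.castSucc)) := by
    intro y hy
    have t0 : pd (0 : Fin 3) (pd (0 : Fin 3) ψ) y = -(A (fun j : Fin 2 => y j.castSucc)) := by
      rw [pd_congr (hev0 y hy), hz0, pd_neg, pd_comp_proj 0 (had _ hy), ← hA]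
    have t1 : pd (1 : Fin 3) (pd (1 : Fin 3) ψ) y = -(C (fun j : Fin 2 => y j.castSucc)) := by
      rw [pd_congr (hev1 y hy), hz1, pd_neg, pd_comp_proj 1 (hbd _ hy), ← hC]
    have t2 : pd (2 : Fin 3) (pd (2 : Fin 3) ψ) y = 0 := by
      rw [pd_congr (hev2 y hy), pd_const]
    show (∑ i, pd i (pd i ψ) y) = _
    rw [Fin.sum_univ_three, t0, t1, t2]
    ring
  -- term 1
  have hG0d : DifferentiableAt ℝ (fun x => (A x + C x) * a x / W x) p :=
    diffAt_div (((hAd p hq).add (hCd p hq)).mul (had p hq)) (hWd p hq) (hWne p)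
  have hG1d : DifferentiableAt ℝ (fun x => (A x + C x) * b x / W x) p :=
    diffAt_div (((hAd p hq).add (hCd p hq)).mul (hbd p hq)) (hWd p hq) (hWne p)
  have hG2d : DifferentiableAt ℝ (fun x => -(A x + C x) / W x) p :=
    diffAt_div (((hAd p hq).add (hCd p hq)).neg) (hWd p hq) (hWne p)
  have hT1 : (∑ i, pd i (fun y => lap ψ y * pd i ψ y / (∑ j, (pd j ψ y) ^ 2)) q)
      = pd 0 (fun x => (A x + C x) * a x / W x) p
        + pd 1 (fun x => (A x + C x) * b x / W x) p := by
    have e0 : (fun y => lap ψ y * pd (0 : Fin 3) ψ y / (∑ j, (pd j ψ y) ^ 2)) =ᶠ[nhds q]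
        fun z => (fun x => (A x + C x) * a x / W x) (fun j : Fin 2 => z j.castSucc) :=
      Filter.eventuallyEq_of_mem (hU3.mem_nhds hqU) (fun z hz => by
        rw [hlap z hz, hS z hz, hz0, hψ01 z hz 0]
        show -(A _ + C _) * -(pd 0 f _) / W _ = (A _ + C _) * a _ / W _
        rw [← ha]; ring)
    have e1 : (fun y => lap ψ y * pd (1 : Fin 3) ψ y / (∑ j, (pd j ψ y) ^ 2)) =ᶠ[nhds q]
        fun z => (fun x => (A x + C x) * b x / W x) (fun j : Fin 2 => z j.castSucc) :=
      Filter.eventuallyEq_of_mem (hU3.mem_nhds hqU) (fun z hz => by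
        rw [hlap z hz, hS z hz, hz1, hψ01 z hz 1]
        show -(A _ + C _) * -(pd 1 f _) / W _ = (A _ + C _) * b _ / W _
        rw [← hb]; ring)
    have e2 : (fun y => lap ψ y * pd (2 : Fin 3) ψ y / (∑ j, (pd j ψ y) ^ 2)) =ᶠ[nhds q]
        fun z => (fun x => -(A x + C x) / W x) (fun j : Fin 2 => z j.castSucc) :=
      Filter.eventuallyEq_of_mem (hU3.mem_nhds hqU) (fun z hz => by
        rw [hlap z hz, hS z hz, hψ2 z hz]
        show -(A _ + C _) * 1 / W _ = -(A _ + C _) / W _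
        ring)
    rw [Fin.sum_univ_three, pd_congr e0, pd_congr e1, pd_congr e2, hz0, hz1,
      pd_comp_proj 0 hG0d, pd_comp_proj 1 hG1d, pd_comp_proj_last hG2d, add_zero]
  -- the log term
  have hlog : ∀ x, HasDerivAt (fun t => Real.log (Real.sqrt t)) (1 / (2 * W x)) (W x) := by
    intro x
    have h1 := (Real.hasDerivAt_sqrt (hWne x)).log (Real.sqrt_ne_zero'.mpr (hWpos x))
    have h2 : Real.sqrt (W x) * Real.sqrt (W x) = W x := Real.mul_self_sqrt (hWpos x).le
    convert h1 using 1
    rw [div_div, mul_assoc, h2]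
  have hLd : ∀ x ∈ Ω, DifferentiableAt ℝ (fun x' => Real.log (Real.sqrt (W x'))) x :=
    fun x hx => ((hlog x).comp_hasFDerivAt x (hWd x hx).hasFDerivAt).differentiableAt
  have hL0 : ∀ x ∈ Ω, pd 0 (fun x' => Real.log (Real.sqrt (W x'))) x
      = (a x * A x + b x * B x) / W x := by
    intro x hx
    have h2 := pd_comp1 (i := (0 : Fin 2)) (u := W)
      (h := fun t => Real.log (Real.sqrt t)) (hlog x) (hWd x hx)
    rw [h2, hpdW0 x hx]
    field_simp
  have hL1 : ∀ x ∈ Ω, pd 1 (fun x' => Real.log (Real.sqrt (W x'))) x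
      = (a x * B x + b x * C x) / W x := by
    intro x hx
    have h2 := pd_comp1 (i := (1 : Fin 2)) (u := W)
      (h := fun t => Real.log (Real.sqrt t)) (hlog x) (hWd x hx)
    rw [h2, hpdW1 x hx]
    field_simp
  have hM0d : DifferentiableAt ℝ (fun x => (a x * A x + b x * B x) / W x) p :=
    diffAt_div (((had p hq).mul (hAd p hq)).add ((hbd p hq).mul (hBd p hq))) (hWd p hq) (hWne p)
  have hM1d : DifferentiableAt ℝ (fun x => (a x * B x + b x * C x) / W x) p :=
    diffAt_div (((had p hq).mul (hBd p hq)).add ((hbd p hq).mul (hCd p hq))) (hWd p hq) (hWne p)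
  have hevLg : ∀ y ∈ U, (fun y' => Real.log (Real.sqrt (∑ j, (pd j ψ y') ^ 2))) =ᶠ[nhds y]
      fun z => (fun x => Real.log (Real.sqrt (W x))) (fun j : Fin 2 => z j.castSucc) :=
    fun y hy => Filter.eventuallyEq_of_mem (hU3.mem_nhds hy) (fun z hz => by rw [hS z hz])
  have hpdLg0 : ∀ y ∈ U, pd (0 : Fin 3) (fun y' => Real.log (Real.sqrt (∑ j, (pd j ψ y') ^ 2))) y
      = (fun x => (a x * A x + b x * B x) / W x) (fun j : Fin 2 => y j.castSucc) := by
    intro y hy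
    rw [pd_congr (hevLg y hy), hz0, pd_comp_proj 0 (hLd _ hy), hL0 _ hy]
  have hpdLg1 : ∀ y ∈ U, pd (1 : Fin 3) (fun y' => Real.log (Real.sqrt (∑ j, (pd j ψ y') ^ 2))) y
      = (fun x => (a x * B x + b x * C x) / W x) (fun j : Fin 2 => y j.castSucc) := by
    intro y hy
    rw [pd_congr (hevLg y hy), hz1, pd_comp_proj 1 (hLd _ hy), hL1 _ hy]
  have hpdLg2 : ∀ y ∈ U, pd (2 : Fin 3) (fun y' => Real.log (Real.sqrt (∑ j, (pd j ψ y') ^ 2))) y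
      = 0 := by
    intro y hy
    rw [pd_congr (hevLg y hy), pd_comp_proj_last (hLd _ hy)]
  have hT2 : lap (fun y => Real.log (Real.sqrt (∑ j, (pd j ψ y) ^ 2))) q
      = pd 0 (fun x => (a x * A x + b x * B x) / W x) p
        + pd 1 (fun x => (a x * B x + b x * C x) / W x) p := by
    have t0 : pd (0 : Fin 3) (pd (0 : Fin 3)
        (fun y => Real.log (Real.sqrt (∑ j, (pd j ψ y) ^ 2)))) q
        = pd 0 (fun x => (a x * A x + b x * B x) / W x) p := by
      have ev : pd (0 : Fin 3) (fun y => Real.log (Real.sqrt (∑ j, (pd j ψ y) ^ 2))) =ᶠ[nhds q]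
          fun z => (fun x => (a x * A x + b x * B x) / W x) (fun j : Fin 2 => z j.castSucc) :=
        Filter.eventuallyEq_of_mem (hU3.mem_nhds hqU) (fun z hz => hpdLg0 z hz)
      rw [pd_congr ev, hz0, pd_comp_proj 0 hM0d]
    have t1 : pd (1 : Fin 3) (pd (1 : Fin 3)
        (fun y => Real.log (Real.sqrt (∑ j, (pd j ψ y) ^ 2)))) q
        = pd 1 (fun x => (a x * B x + b x * C x) / W x) p := by
      have ev : pd (1 : Fin 3) (fun y => Real.log (Real.sqrt (∑ j, (pd j ψ y) ^ 2))) =ᶠ[nhds q]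
          fun z => (fun x => (a x * B x + b x * C x) / W x) (fun j : Fin 2 => z j.castSucc) :=
        Filter.eventuallyEq_of_mem (hU3.mem_nhds hqU) (fun z hz => hpdLg1 z hz)
      rw [pd_congr ev, hz1, pd_comp_proj 1 hM1d]
    have t2 : pd (2 : Fin 3) (pd (2 : Fin 3)
        (fun y => Real.log (Real.sqrt (∑ j, (pd j ψ y) ^ 2)))) q = 0 := by
      have ev : pd (2 : Fin 3) (fun y => Real.log (Real.sqrt (∑ j, (pd j ψ y) ^ 2))) =ᶠ[nhds q]
          fun _ => (0:ℝ) :=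
        Filter.eventuallyEq_of_mem (hU3.mem_nhds hqU) (fun z hz => hpdLg2 z hz)
      rw [pd_congr ev, pd_const]
    show (∑ i, pd i (pd i (fun y => Real.log (Real.sqrt (∑ j, (pd j ψ y) ^ 2)))) q) = _
    rw [Fin.sum_univ_three, t0, t1, t2, add_zero]
  rw [hT1, hT2]
  -- now a 2-dimensional computation at p
  have hsym1 : pd 1 A p = pd 0 B p := by
    rw [hA, pd_comm 1 0 (haC p hq), pd_congr hevB]
  have hsym2 : pd 0 C p = pd 1 B p := by
    rw [hC, pd_comm 0 1 (hbC p hq), ← hB]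
  rw [pd_div (((hAd p hq).fun_add (hCd p hq)).fun_mul (had p hq)) (hWd p hq) (hWne p),
    pd_div (((hAd p hq).fun_add (hCd p hq)).fun_mul (hbd p hq)) (hWd p hq) (hWne p),
    pd_div (((had p hq).fun_mul (hAd p hq)).fun_add ((hbd p hq).fun_mul (hBd p hq))) (hWd p hq) (hWne p),
    pd_div (((had p hq).fun_mul (hBd p hq)).fun_add ((hbd p hq).fun_mul (hCd p hq))) (hWd p hq) (hWne p),
    pd_mul ((hAd p hq).fun_add (hCd p hq)) (had p hq),
    pd_mul ((hAd p hq).fun_add (hCd p hq)) (hbd p hq),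
    pd_add ((had p hq).fun_mul (hAd p hq)) ((hbd p hq).fun_mul (hBd p hq)),
    pd_add ((had p hq).fun_mul (hBd p hq)) ((hbd p hq).fun_mul (hCd p hq)),
    pd_mul (had p hq) (hAd p hq), pd_mul (hbd p hq) (hBd p hq),
    pd_mul (had p hq) (hBd p hq), pd_mul (hbd p hq) (hCd p hq),
    pd_add (hAd p hq) (hCd p hq), pd_add (hAd p hq) (hCd p hq),
    hpdW0 p hq, hpdW1 p hq, ← hA, ← hB, ← hC, hBB' p hq,
    hsym1, hsym2]
  have hWp : W p = 1 + a p ^ 2 + b p ^ 2 := rfl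
  rw [hWp]
  have hne : (1 + a p ^ 2 + b p ^ 2) ≠ 0 := by positivity
  field_simp
  ring
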